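/- Let E be a real Hilbert space, f : E → ℝ a C² function with range bounded below, μ > 0 with ‖iteratedFDeriv ℝ 2 f z‖ ≤ μ for all z ∈ E, and ε with 0 < ε < 2/μ. Let x : ℕ → E be the gradient descent sequence x(l+1) = x(l) − ε • ∇f(x(l)) from an arbitrary x(0), where ∇f denotes the gradient of f. Then: (i) the series Σ_l ‖∇f(x(l))‖² converges (the function l ↦ ‖∇f(x(l))‖² is summable); (ii) ∇f(x(l)) → 0 as l → ∞; and (iii) every cluster point y of the sequence (x(l)) satisfies ∇f(y) = 0. -/

import Mathlib

open Filter Topology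

private lemma descent_aux {E : Type*} [NormedAddCommGroup E] [InnerProductSpace ℝ E]
    [CompleteSpace E]
    (f : E → ℝ) (hf : ContDiff ℝ 2 f)
    (μ : ℝ) (hμ : 0 < μ) (hbound : ∀ z : E, ‖iteratedFDeriv ℝ 2 f z‖ ≤ μ)
    (a v : E) :
    f (a + v) ≤ f a + inner ℝ (gradient f a) v + μ / 2 * ‖v‖ ^ 2 := by
  have hdf : Differentiable ℝ f := hf.differentiable (by norm_num)
  have hcd1 : ContDiff ℝ 1 (fderiv ℝ f) := hf.fderiv_right (m := 1) (by norm_num)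
  have hdf' : Differentiable ℝ (fderiv ℝ f) := hcd1.differentiable (by norm_num)
  -- Lipschitz bound on fderiv
  have hlipnorm : ∀ b c : E, ‖fderiv ℝ f b - fderiv ℝ f c‖ ≤ μ * ‖b - c‖ := by
    have lip : LipschitzWith μ.toNNReal (fderiv ℝ f) := by
      apply lipschitzWith_of_nnnorm_fderiv_le hdf'
      intro z
      rw [← NNReal.coe_le_coe, coe_nnnorm, Real.coe_toNNReal _ hμ.le]
      calc ‖fderiv ℝ (fderiv ℝ f) z‖ = ‖iteratedFDeriv ℝ 0 (fderiv ℝ (fderiv ℝ f)) z‖ := by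
            rw [norm_iteratedFDeriv_zero]
        _ = ‖iteratedFDeriv ℝ 1 (fderiv ℝ f) z‖ := norm_iteratedFDeriv_fderiv
        _ = ‖iteratedFDeriv ℝ 2 f z‖ := norm_iteratedFDeriv_fderiv
        _ ≤ μ := hbound z
    intro b c
    have := lip.dist_le_mul b c
    rwa [dist_eq_norm, dist_eq_norm, Real.coe_toNNReal _ hμ.le] at this
  set φ : ℝ → ℝ := fun t => fderiv ℝ f (a + t • v) v with hφ
  have hderiv : ∀ t : ℝ, HasDerivAt (fun s : ℝ => f (a + s • v)) (φ t) t := by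
    intro t
    have h1 : HasDerivAt (fun s : ℝ => a + s • v) v t := by
      simpa using ((hasDerivAt_id t).smul_const v).const_add a
    have h2 : HasFDerivAt f (fderiv ℝ f (a + t • v)) (a + t • v) := (hdf _).hasFDerivAt
    exact h2.comp_hasDerivAt t h1
  have hcontφ : Continuous φ := by
    have : Continuous (fun t : ℝ => fderiv ℝ f (a + t • v)) :=
      (hcd1.continuous).comp (continuous_const.add (continuous_id.smul continuous_const))
    exact this.clm_apply continuous_const
  have hFTC : f (a + v) - f a = ∫ t in (0:ℝ)..1, φ t := by
    have := intervalIntegral.integral_eq_sub_of_hasDerivAt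
      (f := fun s : ℝ => f (a + s • v)) (f' := φ) (a := 0) (b := 1)
      (fun t _ => hderiv t) (hcontφ.intervalIntegrable 0 1)
    simpa using this.symm
  have hptwise : ∀ t ∈ Set.Icc (0:ℝ) 1, φ t ≤ φ 0 + μ * ‖v‖ ^ 2 * t := by
    intro t ht
    have key : ‖φ t - φ 0‖ ≤ μ * ‖v‖ ^ 2 * t := by
      have h1 : φ t - φ 0 = (fderiv ℝ f (a + t • v) - fderiv ℝ f (a + (0:ℝ) • v)) v := by
        simp [hφ]
      rw [h1]
      calc ‖(fderiv ℝ f (a + t • v) - fderiv ℝ f (a + (0:ℝ) • v)) v‖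
          ≤ ‖fderiv ℝ f (a + t • v) - fderiv ℝ f (a + (0:ℝ) • v)‖ * ‖v‖ :=
            ContinuousLinearMap.le_opNorm _ v
        _ ≤ (μ * ‖(a + t • v) - (a + (0:ℝ) • v)‖) * ‖v‖ := by
            gcongr; exact hlipnorm _ _
        _ = μ * ‖v‖ ^ 2 * t := by
            simp only [zero_smul, add_zero, add_sub_cancel_left, norm_smul,
              Real.norm_eq_abs, abs_of_nonneg ht.1]
            ring
    have := le_of_abs_le (by rwa [Real.norm_eq_abs] at key : |φ t - φ 0| ≤ μ * ‖v‖ ^ 2 * t)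
    linarith
  have hint : (∫ t in (0:ℝ)..1, φ t) ≤ ∫ t in (0:ℝ)..1, (φ 0 + μ * ‖v‖ ^ 2 * t) := by
    apply intervalIntegral.integral_mono_on zero_le_one
      (hcontφ.intervalIntegrable 0 1)
      ((continuous_const.add (continuous_const.mul continuous_id)).intervalIntegrable 0 1)
      hptwise
  have hval : (∫ t in (0:ℝ)..1, (φ 0 + μ * ‖v‖ ^ 2 * t)) = φ 0 + μ / 2 * ‖v‖ ^ 2 := by
    have hii : IntervalIntegrable (fun t : ℝ => μ * ‖v‖ ^ 2 * t) MeasureTheory.volume 0 1 :=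
      (by fun_prop : Continuous fun t : ℝ => μ * ‖v‖ ^ 2 * t).intervalIntegrable 0 1
    rw [intervalIntegral.integral_add intervalIntegrable_const hii,
      intervalIntegral.integral_const_mul]
    simp [integral_id]
    ring
  have hφ0 : φ 0 = inner ℝ (gradient f a) v := by
    simp only [hφ, zero_smul, add_zero]
    rw [gradient]
    rw [show fderiv ℝ f a v
        = (InnerProductSpace.toDual ℝ E) ((InnerProductSpace.toDual ℝ E).symm (fderiv ℝ f a)) v by
      rw [LinearIsometryEquiv.apply_symm_apply]]
    rw [InnerProductSpace.toDual_apply_apply]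
  have : f (a + v) - f a ≤ φ 0 + μ / 2 * ‖v‖ ^ 2 := by
    rw [hFTC]; rw [← hval]; exact hint
  rw [hφ0] at this
  linarith

theorem stmt_10 {E : Type*} [NormedAddCommGroup E] [InnerProductSpace ℝ E] [CompleteSpace E]
    (f : E → ℝ) (hf : ContDiff ℝ 2 f) (hbdd : BddBelow (Set.range f))
    (μ : ℝ) (hμ : 0 < μ) (hbound : ∀ z : E, ‖iteratedFDeriv ℝ 2 f z‖ ≤ μ)
    (ε : ℝ) (hε₀ : 0 < ε) (hε₁ : ε < 2 / μ)
    (x : ℕ → E) (hx : ∀ l : ℕ, x (l + 1) = x l - ε • gradient f (x l)) :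
    Summable (fun l : ℕ => ‖gradient f (x l)‖ ^ 2) ∧
      Tendsto (fun l : ℕ => gradient f (x l)) atTop (𝓝 0) ∧
      ∀ y : E, MapClusterPt y atTop x → gradient f y = 0 := by
  set g : ℕ → E := fun l => gradient f (x l) with hg
  set c : ℝ := ε - μ * ε ^ 2 / 2 with hc
  have hεμ : ε * μ < 2 := by
    rw [div_eq_mul_inv] at hε₁
    calc ε * μ < (2 * μ⁻¹) * μ := by gcongr
      _ = 2 := by field_simp
  have hcpos : 0 < c := by
    have h2 : (0:ℝ) < 2 - ε * μ := by linarith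
    have h3 : c = ε * (2 - ε * μ) / 2 := by rw [hc]; ring
    rw [h3]
    exact div_pos (mul_pos hε₀ h2) two_pos
  -- descent inequality
  have key : ∀ l : ℕ, c * ‖g l‖ ^ 2 ≤ f (x l) - f (x (l + 1)) := by
    intro l
    have h1 := descent_aux f hf μ hμ hbound (x l) (-(ε • g l))
    have h2 : x l + -(ε • g l) = x (l + 1) := by rw [hx l]; abel
    rw [h2] at h1
    have h3 : (inner ℝ (g l) (-(ε • g l)) : ℝ) = -(ε * ‖g l‖ ^ 2) := by
      rw [inner_neg_right, real_inner_smul_right, real_inner_self_eq_norm_sq]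
    have h4 : ‖-(ε • g l)‖ ^ 2 = ε ^ 2 * ‖g l‖ ^ 2 := by
      rw [norm_neg, norm_smul, Real.norm_eq_abs, abs_of_pos hε₀, mul_pow]
    rw [h3, h4] at h1
    simp only [hc]
    nlinarith
  obtain ⟨B, hB⟩ := hbdd
  have hBle : ∀ z : E, B ≤ f z := fun z => hB (Set.mem_range_self z)
  -- partial sums bounded
  have hpartial : ∀ n : ℕ, ∑ l ∈ Finset.range n, ‖g l‖ ^ 2 ≤ (f (x 0) - B) / c := by
    intro n
    have htel : ∑ l ∈ Finset.range n, (f (x l) - f (x (l + 1))) = f (x 0) - f (x n) :=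
      Finset.sum_range_sub' (fun l => f (x l)) n
    have h1 : c * ∑ l ∈ Finset.range n, ‖g l‖ ^ 2 ≤ f (x 0) - f (x n) := by
      rw [Finset.mul_sum, ← htel]
      exact Finset.sum_le_sum fun l _ => key l
    have h2 : f (x 0) - f (x n) ≤ f (x 0) - B := by linarith [hBle (x n)]
    rw [le_div_iff₀ hcpos, mul_comm]
    linarith
  have hsummable : Summable (fun l : ℕ => ‖g l‖ ^ 2) :=
    summable_of_sum_range_le (fun l => sq_nonneg _) hpartial
  refine ⟨hsummable, ?_, ?_⟩
  · -- tendsto 0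
    have h0 : Tendsto (fun l => ‖g l‖ ^ 2) atTop (𝓝 0) := hsummable.tendsto_atTop_zero
    have h1 : Tendsto (fun l => Real.sqrt (‖g l‖ ^ 2)) atTop (𝓝 (Real.sqrt 0)) :=
      (Real.continuous_sqrt.continuousAt).tendsto.comp h0
    have h2 : Tendsto (fun l => ‖g l‖) atTop (𝓝 0) := by
      simpa [Real.sqrt_sq (norm_nonneg _)] using h1
    exact tendsto_zero_iff_norm_tendsto_zero.2 h2
  · -- cluster points
    intro y hy
    have hgrad_cont : Continuous (gradient f) := by
      have h1 : Continuous (fderiv ℝ f) := (hf.fderiv_right (m := 1) (by norm_num)).continuous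
      exact ((InnerProductSpace.toDual ℝ E).symm.continuous).comp h1
    have hcl : MapClusterPt (gradient f y) atTop (gradient f ∘ x) :=
      hy.continuousAt_comp hgrad_cont.continuousAt
    have htendsto : Tendsto (gradient f ∘ x) atTop (𝓝 0) := by
      have h0 : Tendsto (fun l => ‖g l‖ ^ 2) atTop (𝓝 0) := hsummable.tendsto_atTop_zero
      have h1 : Tendsto (fun l => Real.sqrt (‖g l‖ ^ 2)) atTop (𝓝 (Real.sqrt 0)) :=
        (Real.continuous_sqrt.continuousAt).tendsto.comp h0
      have h2 : Tendsto (fun l => ‖g l‖) atTop (𝓝 0) := by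
        simpa [Real.sqrt_sq (norm_nonneg _)] using h1
      exact tendsto_zero_iff_norm_tendsto_zero.2 h2
    have : ClusterPt (gradient f y) (𝓝 0) := hcl.clusterPt.mono htendsto
    exact eq_of_nhds_neBot this.neBot
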